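/- If 0 ≤ p' < p ≤ n and d(p') ≠ d(p) (two undefined values counting as equal, an undefined and a defined value as distinct), then there exists an index j with p' < t_j ≤ p. Consequently, for every p and every i with i + 2 ≤ l_p there exists t ∈ T with a_{i+1}^{(p)} < t ≤ a_i^{(p)}. -/
import Mathlib


/-- `d(p) = max { s j : t j ≤ p }`, with `⊥` meaning "undefined" (i.e. `-∞`). -/
noncomputable def dvalue (m : ℕ) (s t : ℕ → ℤ) (p : ℤ) : WithBot ℤ :=
  ((Finset.range m).filter (fun j => t j ≤ p)).sup (fun j => (s j : WithBot ℤ))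

/-- `d†(p) = min { t j : s j ≥ p }`, with `⊤` meaning "undefined" (i.e. `+∞`). -/
noncomputable def ddual (m : ℕ) (s t : ℕ → ℤ) (p : ℤ) : WithTop ℤ :=
  ((Finset.range m).filter (fun j => p ≤ s j)).inf (fun j => (t j : WithTop ℤ))

/-- The extension of `d` to `WithBot ℤ`, sending `⊥` to `⊥`. -/
noncomputable def dW (m : ℕ) (s t : ℕ → ℤ) : WithBot ℤ → WithBot ℤ :=
  WithBot.recBotCoe ⊥ (dvalue m s t)

/-- The extension of `d†` to `WithTop ℤ`, sending `⊤` to `⊤`. -/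
noncomputable def dtW (m : ℕ) (s t : ℕ → ℤ) : WithTop ℤ → WithTop ℤ :=
  WithTop.recTopCoe ⊤ (ddual m s t)

/-- The (total extension of the) sequence `a_i^{(p)}`:
`a_0 = p`, `a_1 = p - 1`, `a_{i+2} = d(a_i)`.  For `i ≤ l_p` this agrees with the
sequence of the paper. -/
noncomputable def aSeq (m : ℕ) (s t : ℕ → ℤ) (p : ℤ) : ℕ → WithBot ℤ
  | 0 => (p : WithBot ℤ)
  | 1 => ((p - 1 : ℤ) : WithBot ℤ)
  | i + 2 => dW m s t (aSeq m s t p i)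

/-- The length `l_p`: `l_0 = 0`, and for `p ≠ 0` it is the least `j ≥ 1` with
`d(a_{j-1}^{(p)}) = d(a_j^{(p)})` (undefined values compared as `⊥`). -/
noncomputable def lSeq (m : ℕ) (s t : ℕ → ℤ) (p : ℤ) : ℕ :=
  if p = 0 then 0
  else sInf {j : ℕ | 1 ≤ j ∧ dW m s t (aSeq m s t p (j - 1)) = dW m s t (aSeq m s t p j)}

/-- The (total extension of the) dual sequence `a_i^{(p)†}`:
`a_0 = p`, `a_1 = p + 1`, `a_{i+2} = d†(a_i)`. -/
noncomputable def aSeqD (m : ℕ) (s t : ℕ → ℤ) (p : ℤ) : ℕ → WithTop ℤ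
  | 0 => (p : WithTop ℤ)
  | 1 => ((p + 1 : ℤ) : WithTop ℤ)
  | i + 2 => dtW m s t (aSeqD m s t p i)

/-- The dual length `l_p†`: `l_n† = 0`, and for `p ≠ n` it is the least `j ≥ 1` with
`d†(a_{j-1}^{(p)†}) = d†(a_j^{(p)†})` (undefined values compared as `⊤`). -/
noncomputable def lSeqD (n : ℤ) (m : ℕ) (s t : ℕ → ℤ) (p : ℤ) : ℕ :=
  if p = n then 0
  else sInf {j : ℕ | 1 ≤ j ∧ dtW m s t (aSeqD m s t p (j - 1)) = dtW m s t (aSeqD m s t p j)}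

section aux
lemma dvalue_mono (m : ℕ) (s t : ℕ → ℤ) {p q : ℤ} (h : p ≤ q) :
    dvalue m s t p ≤ dvalue m s t q := by
  apply Finset.sup_mono
  intro j hj
  simp only [Finset.mem_filter] at *
  exact ⟨hj.1, hj.2.trans h⟩

lemma dW_coe (m : ℕ) (s t : ℕ → ℤ) (x : ℤ) : dW m s t (x : WithBot ℤ) = dvalue m s t x := rfl

lemma dvalue_le (m : ℕ) (s t : ℕ → ℤ) (hlen : ∀ j : ℕ, j < m → s j + 2 ≤ t j) (p : ℤ) :
    dvalue m s t p ≤ ((p - 2 : ℤ) : WithBot ℤ) := by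
  apply Finset.sup_le
  intro j hj
  simp only [Finset.mem_filter, Finset.mem_range] at hj
  have := hlen j hj.1
  exact_mod_cast (by linarith : s j ≤ p - 2)

lemma dvalue_nonneg (m : ℕ) (s t : ℕ → ℤ) (hs0 : ∀ j : ℕ, j < m → 0 ≤ s j) {p z : ℤ}
    (h : dvalue m s t p = (z : WithBot ℤ)) : 0 ≤ z := by
  have hne : ((Finset.range m).filter (fun j => t j ≤ p)).Nonempty := by
    by_contra hc
    rw [Finset.not_nonempty_iff_eq_empty] at hc
    rw [dvalue, hc] at h
    simp at h
  obtain ⟨j, hj⟩ := hne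
  have hle : (s j : WithBot ℤ) ≤ dvalue m s t p :=
    Finset.le_sup (f := fun j => (s j : WithBot ℤ)) hj
  rw [h] at hle
  have hjm : j < m := by
    have := Finset.mem_filter.1 hj
    simpa using this.1
  have := hs0 j hjm
  exact le_trans this (by exact_mod_cast hle)

lemma part1 (m : ℕ) (s t : ℕ → ℤ) {p' p : ℤ} (hlt : p' < p)
    (hne : dvalue m s t p' ≠ dvalue m s t p) :
    ∃ j : ℕ, j < m ∧ p' < t j ∧ t j ≤ p := by
  by_contra h
  push_neg at h
  apply hne
  unfold dvalue
  congr 1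
  ext j
  simp only [Finset.mem_filter, Finset.mem_range]
  constructor
  · rintro ⟨hj, hle⟩; exact ⟨hj, hle.trans hlt.le⟩
  · rintro ⟨hj, hle⟩
    refine ⟨hj, ?_⟩
    by_contra hgt
    push_neg at hgt
    exact absurd hle (not_le.2 (h j hj hgt))
end aux

theorem exists_t_between
    (n : ℤ) (m : ℕ) (s t : ℕ → ℤ)
    (hn : 0 ≤ n)
    (hsmono : ∀ i j : ℕ, i < j → j < m → s i < s j)
    (htmono : ∀ i j : ℕ, i < j → j < m → t i < t j)
    (hs0 : ∀ j : ℕ, j < m → 0 ≤ s j)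
    (htn : ∀ j : ℕ, j < m → t j ≤ n)
    (hlen : ∀ j : ℕ, j < m → s j + 2 ≤ t j) :
    (∀ p' p : ℤ, 0 ≤ p' → p' < p → p ≤ n → dvalue m s t p' ≠ dvalue m s t p →
      ∃ j : ℕ, j < m ∧ p' < t j ∧ t j ≤ p) ∧
    (∀ p : ℤ, 0 ≤ p → p ≤ n → ∀ i : ℕ, i + 2 ≤ lSeq m s t p →
      ∃ j : ℕ, j < m ∧ aSeq m s t p (i + 1) < (t j : WithBot ℤ) ∧
        (t j : WithBot ℤ) ≤ aSeq m s t p i) := by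
  constructor
  · intro p' p _ hlt _ hne
    exact part1 m s t hlt hne
  · intro p hp0 hpn i hi
    -- p ≠ 0
    have hpne : p ≠ 0 := by
      intro h
      rw [lSeq, if_pos h] at hi
      omega
    have hl : lSeq m s t p =
        sInf {j : ℕ | 1 ≤ j ∧ dW m s t (aSeq m s t p (j - 1)) = dW m s t (aSeq m s t p j)} := by
      rw [lSeq, if_neg hpne]
    -- non-equality below lSeq
    have hne : ∀ j : ℕ, 1 ≤ j → j < lSeq m s t p →
        dW m s t (aSeq m s t p (j - 1)) ≠ dW m s t (aSeq m s t p j) := by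
      intro j h1 hj heq
      have : lSeq m s t p ≤ j := by
        rw [hl]
        exact Nat.sInf_le ⟨h1, heq⟩
      omega
    have hp1 : 1 ≤ p := by omega
    -- key strong induction claim
    have key : ∀ i : ℕ, i + 2 ≤ lSeq m s t p →
        ∃ x y : ℤ, aSeq m s t p i = (x : WithBot ℤ) ∧ aSeq m s t p (i + 1) = (y : WithBot ℤ) ∧
          0 ≤ y ∧ y < x ∧ x ≤ n := by
      intro i
      induction i using Nat.strong_induction_on with
      | _ i ih =>
        intro hi2
        match i with
        | 0 =>
          exact ⟨p, p - 1, rfl, rfl, by omega, by omega, hpn⟩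
        | Nat.succ k =>
          obtain ⟨x, y, hax, hay, hy0, hyx, hxn⟩ := ih k (by omega) (by omega)
          -- a_{k+2} = dvalue x
          have ha2 : aSeq m s t p (k + 2) = dvalue m s t x := by
            show dW m s t (aSeq m s t p k) = _
            rw [hax, dW_coe]
          -- dvalue x ≠ dvalue y (condition j = k+1)
          have hcond : dvalue m s t x ≠ dvalue m s t y := by
            have := hne (k + 1) (by omega) (by omega)
            simp only [Nat.add_sub_cancel] at this
            rw [hax, hay, dW_coe, dW_coe] at this
            exact this
          -- dvalue y ≤ dvalue x
          have hmono := dvalue_mono m s t (le_of_lt hyx)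
          -- dvalue x ≠ ⊥
          have hxb : dvalue m s t x ≠ ⊥ := by
            intro hb
            apply hcond
            rw [hb]
            have h2 : dvalue m s t y ≤ (⊥ : WithBot ℤ) := hb ▸ hmono
            exact (le_antisymm h2 bot_le).symm
          obtain ⟨z, hz⟩ := WithBot.ne_bot_iff_exists.1 hxb
          have hz : dvalue m s t x = (z : WithBot ℤ) := hz.symm
          have hz0 : 0 ≤ z := dvalue_nonneg m s t hs0 hz
          -- show z < y
          have hzy : z < y := by
            match k with
            | 0 =>
              -- x = p, y = p - 1
              have hx : x = p := by
                have : ((p : ℤ) : WithBot ℤ) = (x : WithBot ℤ) := hax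
                exact_mod_cast this.symm
              have hy : y = p - 1 := by
                have : ((p - 1 : ℤ) : WithBot ℤ) = (y : WithBot ℤ) := hay
                exact_mod_cast this.symm
              have := dvalue_le m s t hlen x
              rw [hz] at this
              have : z ≤ x - 2 := by exact_mod_cast this
              omega
            | Nat.succ k' =>
              obtain ⟨x', y', hax', hay', _, hy'x', _⟩ := ih k' (by omega) (by omega)
              -- y' = x
              have hxy' : y' = x := by
                have : (y' : WithBot ℤ) = (x : WithBot ℤ) := by rw [← hay', ← hax]
                exact_mod_cast this
              -- dvalue x' = y  (since a_{k'+2} = dW a_{k'} = dvalue x', and a_{k'+2} = a_{k+1} = y)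
              have hdx' : dvalue m s t x' = (y : WithBot ℤ) := by
                have : aSeq m s t p (k' + 2) = dW m s t (aSeq m s t p k') := rfl
                rw [hax', dW_coe] at this
                rw [← this]
                exact hay
              -- condition j = k = k'+1 : dW a_{k'} ≠ dW a_{k'+1}... i.e. dvalue x' ≠ dvalue x
              have hcond2 : dvalue m s t x' ≠ dvalue m s t x := by
                have := hne (k' + 1) (by omega) (by omega)
                simp only [Nat.add_sub_cancel] at this
                rw [hax', hax, dW_coe, dW_coe] at this
                exact this
              have hle2 : dvalue m s t x ≤ dvalue m s t x' := by
                subst hxy'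
                exact dvalue_mono m s t (le_of_lt hy'x')
              rw [hz, hdx'] at hle2 hcond2
              have hlt2 : (z : WithBot ℤ) < (y : WithBot ℤ) :=
                lt_of_le_of_ne hle2 hcond2.symm
              exact_mod_cast hlt2
          exact ⟨y, z, hay, by rw [show k + 1 + 1 = k + 2 from rfl, ha2, hz], hz0, hzy, by omega⟩
    obtain ⟨x, y, hax, hay, hy0, hyx, hxn⟩ := key i hi
    -- dvalue y ≠ dvalue x from condition j = i+1
    have hcond : dvalue m s t y ≠ dvalue m s t x := by
      have := hne (i + 1) (by omega) (by omega)
      simp only [Nat.add_sub_cancel] at this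
      rw [hax, hay, dW_coe, dW_coe] at this
      exact this.symm
    obtain ⟨j, hjm, hj1, hj2⟩ := part1 m s t hyx hcond
    refine ⟨j, hjm, ?_, ?_⟩
    · rw [hay]; exact_mod_cast hj1
    · rw [hax]; exact_mod_cast hj2
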